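/- Let μᵣ and μₛ be probability measures on Ω, f a labeling function, and h₁, h₂ any two hypotheses. Let δ(μᵣ, μₛ) denote the total variation distance between μᵣ and μₛ (i.e., the total variation norm of μᵣ − μₛ). Then the synthetic and real risk differences satisfy Δεₛ − Δεᵣ ≤ δ(μᵣ, μₛ). -/

import Mathlib

open MeasureTheory

theorem risk_diff_gap_le_total_variation {Ω Y : Type*} [MeasurableSpace Ω]
    (μr μs : Measure Ω) [IsProbabilityMeasure μr] [IsProbabilityMeasure μs]
    (f h₁ h₂ : Ω → Y)
    (hm1 : MeasurableSet {x | h₁ x ≠ f x})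
    (hm2 : MeasurableSet {x | h₂ x ≠ f x})
    (hm12 : MeasurableSet {x | h₁ x ≠ h₂ x}) :
    ((μs {x | h₂ x ≠ f x}).toReal - (μs {x | h₁ x ≠ f x}).toReal) -
      ((μr {x | h₂ x ≠ f x}).toReal - (μr {x | h₁ x ≠ f x}).toReal) ≤
        ((μr.toSignedMeasure - μs.toSignedMeasure).totalVariation Set.univ).toReal := by
  set A := {x | h₂ x ≠ f x}
  set B := {x | h₁ x ≠ f x}
  set ξ := μr.toSignedMeasure - μs.toSignedMeasure with hξ
  have hξapp : ∀ E : Set Ω, MeasurableSet E → ξ E = (μr E).toReal - (μs E).toReal := by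
    intro E hE
    simp [hξ, Measure.toSignedMeasure_apply_measurable hE, hE]
    rfl
  set p := ξ.toJordanDecomposition.posPart with hp
  set n := ξ.toJordanDecomposition.negPart with hn
  have hpn : ∀ E : Set Ω, MeasurableSet E → ξ E = (p E).toReal - (n E).toReal := by
    intro E hE
    conv_lhs => rw [← ξ.toSignedMeasure_toJordanDecomposition]
    rw [JordanDecomposition.toSignedMeasure, Measure.toSignedMeasure_sub_apply hE]
    rfl
  have hAB : MeasurableSet (A \ B) := hm2.diff hm1
  have hBA : MeasurableSet (B \ A) := hm1.diff hm2
  have key1 : (μs A).toReal - (μs B).toReal - ((μr A).toReal - (μr B).toReal)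
      = -ξ (A \ B) + ξ (B \ A) := by
    rw [hξapp _ hAB, hξapp _ hBA]
    have h1 : μs A = μs (A \ B) + μs (A ∩ B) := by
      rw [← measure_diff_add_inter A hm1]
    have h2 : μs B = μs (B \ A) + μs (A ∩ B) := by
      rw [← measure_diff_add_inter B hm2, Set.inter_comm]
    have h3 : μr A = μr (A \ B) + μr (A ∩ B) := by
      rw [← measure_diff_add_inter A hm1]
    have h4 : μr B = μr (B \ A) + μr (A ∩ B) := by
      rw [← measure_diff_add_inter B hm2, Set.inter_comm]
    have fin : ∀ (μ : Measure Ω) (E : Set Ω), μ = μr ∨ μ = μs → μ E ≠ ⊤ := by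
      rintro μ E (rfl | rfl) <;> exact measure_ne_top _ _
    rw [h1, h2, h3, h4]
    rw [ENNReal.toReal_add (measure_ne_top _ _) (measure_ne_top _ _),
        ENNReal.toReal_add (measure_ne_top _ _) (measure_ne_top _ _),
        ENNReal.toReal_add (measure_ne_top _ _) (measure_ne_top _ _),
        ENNReal.toReal_add (measure_ne_top _ _) (measure_ne_top _ _)]
    ring
  rw [key1]
  have hTV : ξ.totalVariation Set.univ = p Set.univ + n Set.univ := rfl
  rw [hTV, hpn _ hAB, hpn _ hBA,
      ENNReal.toReal_add (measure_ne_top _ _) (measure_ne_top _ _)]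
  have h5 : (p (B \ A)).toReal ≤ (p Set.univ).toReal :=
    ENNReal.toReal_mono (measure_ne_top _ _) (measure_mono (Set.subset_univ _))
  have h6 : (n (A \ B)).toReal ≤ (n Set.univ).toReal :=
    ENNReal.toReal_mono (measure_ne_top _ _) (measure_mono (Set.subset_univ _))
  have h7 : (0:ℝ) ≤ (p (A \ B)).toReal := ENNReal.toReal_nonneg
  have h8 : (0:ℝ) ≤ (n (B \ A)).toReal := ENNReal.toReal_nonneg
  linarith
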